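/- Let G = (V, E) be a finite graph and let w ∈ ℝ_{>0}^E. Define z ∈ ℝ_{≥0}^E by z_e = w_e / (Σ_{g ∈ δ(u) ∪ δ(v)} w_g) for each edge e = {u,v}. Then z lies in the convex hull of characteristic vectors of matchings of G. Concretely: there exists a random matching M ⊆ E with Pr[e ∈ M] = z_e for every e ∈ E. -/

import Mathlib

set_option linter.unusedSectionVars false
set_option linter.unusedVariables false

section Aux
variable {V E : Type*} [Fintype V] [Fintype E] [DecidableEq V] [DecidableEq E]
variable (fst snd : E → V) (w : E → ℝ)

/-- closed neighborhood of an edge -/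
def Nbr (e : E) : Finset E :=
  Finset.univ.filter (fun g => fst g = fst e ∨ snd g = fst e ∨ fst g = snd e ∨ snd g = snd e)

lemma Nbr_symm {e g : E} : g ∈ Nbr fst snd e ↔ e ∈ Nbr fst snd g := by
  simp only [Nbr, Finset.mem_filter, Finset.mem_univ, true_and]
  constructor <;> (rintro (h | h | h | h) <;> simp [h])

lemma self_mem_Nbr (e : E) : e ∈ Nbr fst snd e := by
  simp [Nbr]

/-- the recursive distribution: `mu n S D m` is the probability that the random matching
equals `m`, with alive edge set `S` (of cardinality `n`) and dead edges `D`. -/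
noncomputable def mu : ℕ → Finset E → Finset E → Finset E → ℝ
  | 0, _, _, m => if m = ∅ then 1 else 0
  | (n+1), S, D, m =>
      ∑ a ∈ S, (w a / ∑ g ∈ S, w g) *
        (if a ∈ D then mu n (S.erase a) (D ∪ Nbr fst snd a) m
         else if a ∈ m then mu n (S.erase a) (D ∪ Nbr fst snd a) (m.erase a) else 0)

lemma mu_support : ∀ (n : ℕ) (S D m : Finset E), mu fst snd w n S D m ≠ 0 →
    m ⊆ S ∧ (∀ x ∈ m, x ∉ D) ∧ ∀ e ∈ m, ∀ f ∈ m, e ≠ f → f ∉ Nbr fst snd e := by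
  intro n
  induction n with
  | zero =>
    intro S D m h
    have : m = ∅ := by by_contra hm; simp [mu, hm] at h
    subst this
    simp
  | succ n ih =>
    intro S D m h
    obtain ⟨a, ha, hterm⟩ := Finset.exists_ne_zero_of_sum_ne_zero h
    by_cases haD : a ∈ D
    · rw [if_pos haD] at hterm
      have h2 : mu fst snd w n (S.erase a) (D ∪ Nbr fst snd a) m ≠ 0 := by
        intro h0; rw [h0, mul_zero] at hterm; exact hterm rfl
      obtain ⟨hsub, hD, hM⟩ := ih _ _ _ h2
      refine ⟨hsub.trans (Finset.erase_subset _ _), fun x hx => ?_, hM⟩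
      exact fun hxD => hD x hx (Finset.mem_union_left _ hxD)
    · rw [if_neg haD] at hterm
      by_cases ham : a ∈ m
      · rw [if_pos ham] at hterm
        have h2 : mu fst snd w n (S.erase a) (D ∪ Nbr fst snd a) (m.erase a) ≠ 0 := by
          intro h0; rw [h0, mul_zero] at hterm; exact hterm rfl
        obtain ⟨hsub, hD, hM⟩ := ih _ _ _ h2
        have hma : ∀ x ∈ m, x ≠ a → x ∈ (m.erase a) := fun x hx hxa =>
          Finset.mem_erase.mpr ⟨hxa, hx⟩
        have hnotN : ∀ x ∈ m.erase a, x ∉ Nbr fst snd a := fun x hx =>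
          fun hN => hD x hx (Finset.mem_union_right _ hN)
        refine ⟨?_, ?_, ?_⟩
        · intro x hx
          rcases eq_or_ne x a with rfl | hxa
          · exact ha
          · exact Finset.mem_of_mem_erase (hsub (hma x hx hxa))
        · intro x hx
          rcases eq_or_ne x a with rfl | hxa
          · exact haD
          · intro hxD; exact hD x (hma x hx hxa) (Finset.mem_union_left _ hxD)
        · intro e he f hf hef
          rcases eq_or_ne e a with rfl | hea
          · -- e = a, f ≠ a, f ∈ m.erase a, f ∉ Nbr a
            exact hnotN f (hma f hf hef.symm)
          · rcases eq_or_ne f a with rfl | hfa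
            · -- f = a; need a ∉ Nbr e; e ∉ Nbr a by hnotN, use symmetry
              intro hN
              exact hnotN e (hma e he hea) ((Nbr_symm fst snd).mpr hN)
            · exact hM e (hma e he hea) f (hma f hf hfa) hef
      · rw [if_neg ham, mul_zero] at hterm
        exact absurd rfl hterm

lemma mu_nonneg (hw : ∀ e, 0 < w e) :
    ∀ (n : ℕ) (S D m : Finset E), 0 ≤ mu fst snd w n S D m := by
  intro n
  induction n with
  | zero => intro S D m; unfold mu; positivity
  | succ n ih =>
    intro S D m
    unfold mu
    apply Finset.sum_nonneg
    intro a ha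
    apply mul_nonneg
    · apply div_nonneg (hw a).le
      exact Finset.sum_nonneg fun g _ => (hw g).le
    · split_ifs <;> first | exact ih _ _ _ | exact le_refl 0

/-- reindexing: summing `f (m.erase a)` over sets containing `a` equals summing `f`,
provided `f` vanishes on sets containing `a`. -/
lemma sum_erase_eq {a : E} (f : Finset E → ℝ) (hf : ∀ m, a ∈ m → f m = 0) :
    ∑ m : Finset E, (if a ∈ m then f (m.erase a) else 0) = ∑ m : Finset E, f m := by
  rw [Finset.sum_ite, Finset.sum_const_zero, add_zero]
  rw [Finset.sum_bij' (i := fun m _ => m.erase a) (j := fun m _ => insert a m)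
    (t := Finset.univ.filter (fun m => a ∉ m))
    (hi := fun m hm => by simp)
    (hj := fun m hm => by simp)
    (left_neg := fun m hm => Finset.insert_erase (by simpa using hm))
    (right_neg := fun m hm => Finset.erase_insert (by simpa using hm))
    (h := fun m hm => rfl)]
  rw [← Finset.sum_filter_add_sum_filter_not Finset.univ (fun m => a ∉ m) f]
  have : ∑ m ∈ Finset.univ.filter (fun m => ¬ a ∉ m), f m = 0 := by
    apply Finset.sum_eq_zero
    intro m hm
    exact hf m (by simpa using (Finset.mem_filter.mp hm).2)
  rw [this, add_zero]

lemma mu_total (hw : ∀ e, 0 < w e) :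
    ∀ (n : ℕ) (S D : Finset E), S.card = n → ∑ m : Finset E, mu fst snd w n S D m = 1 := by
  intro n
  induction n with
  | zero => intro S D _; unfold mu; simp
  | succ n ih =>
    intro S D hS
    have hSne : S.Nonempty := Finset.card_pos.mp (by omega)
    have hW : (0:ℝ) < ∑ g ∈ S, w g := Finset.sum_pos (fun g _ => hw g) hSne
    unfold mu
    rw [Finset.sum_comm]
    have hterm : ∀ a ∈ S, (∑ m : Finset E, (w a / ∑ g ∈ S, w g) *
        (if a ∈ D then mu fst snd w n (S.erase a) (D ∪ Nbr fst snd a) m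
         else if a ∈ m then mu fst snd w n (S.erase a) (D ∪ Nbr fst snd a) (m.erase a) else 0))
        = w a / ∑ g ∈ S, w g := by
      intro a ha
      rw [← Finset.mul_sum]
      have hcard : (S.erase a).card = n := by simp [Finset.card_erase_of_mem ha, hS]
      by_cases haD : a ∈ D
      · simp only [if_pos haD]
        rw [ih _ _ hcard, mul_one]
      · simp only [if_neg haD]
        rw [sum_erase_eq (f := fun m => mu fst snd w n (S.erase a) (D ∪ Nbr fst snd a) m)
          (fun m hm => by
            by_contra h0
            exact absurd ((mu_support fst snd w n _ _ m h0).1 hm) (Finset.notMem_erase a S))]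
        rw [ih _ _ hcard, mul_one]
    rw [Finset.sum_congr rfl hterm, ← Finset.sum_div, div_self (ne_of_gt hW)]

lemma mu_marginal (hw : ∀ e, 0 < w e) :
    ∀ (n : ℕ) (S D : Finset E), S.card = n → ∀ e : E,
    (∑ m : Finset E, if e ∈ m then mu fst snd w n S D m else 0) =
      if e ∈ S ∧ e ∉ D then w e / ∑ g ∈ Nbr fst snd e ∩ S, w g else 0 := by
  intro n
  induction n with
  | zero =>
    intro S D hS e
    obtain rfl : S = ∅ := Finset.card_eq_zero.mp hS
    unfold mu
    rw [if_neg (by simp)]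
    apply Finset.sum_eq_zero
    intro m _
    by_cases h1 : e ∈ m
    · rw [if_pos h1, if_neg (by rintro rfl; exact Finset.notMem_empty e h1)]
    · rw [if_neg h1]
  | succ n ih =>
    intro S D hS e
    have hSne : S.Nonempty := Finset.card_pos.mp (by omega)
    have hW : (0:ℝ) < ∑ g ∈ S, w g := Finset.sum_pos (fun g _ => hw g) hSne
    unfold mu
    have step1 : ∀ m : Finset E,
        (if e ∈ m then (∑ a ∈ S, (w a / ∑ g ∈ S, w g) *
          (if a ∈ D then mu fst snd w n (S.erase a) (D ∪ Nbr fst snd a) m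
           else if a ∈ m then mu fst snd w n (S.erase a) (D ∪ Nbr fst snd a) (m.erase a) else 0))
         else 0)
        = ∑ a ∈ S, (w a / ∑ g ∈ S, w g) *
            (if e ∈ m then
              (if a ∈ D then mu fst snd w n (S.erase a) (D ∪ Nbr fst snd a) m
               else if a ∈ m then mu fst snd w n (S.erase a) (D ∪ Nbr fst snd a) (m.erase a) else 0)
             else 0) := by
      intro m
      by_cases hem : e ∈ m
      · simp only [if_pos hem]
      · simp only [if_neg hem, mul_zero, Finset.sum_const_zero]
    rw [Finset.sum_congr rfl (fun m _ => step1 m), Finset.sum_comm]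
    have hI : ∀ a ∈ S,
        (∑ m : Finset E,
          (if e ∈ m then
            (if a ∈ D then mu fst snd w n (S.erase a) (D ∪ Nbr fst snd a) m
             else if a ∈ m then mu fst snd w n (S.erase a) (D ∪ Nbr fst snd a) (m.erase a) else 0)
           else 0))
        = (if a ∈ D then
            (if e ∈ S.erase a ∧ e ∉ D ∪ Nbr fst snd a then
              w e / ∑ g ∈ Nbr fst snd e ∩ (S.erase a), w g else 0)
           else if a = e then 1
           else (if e ∈ S.erase a ∧ e ∉ D ∪ Nbr fst snd a then
              w e / ∑ g ∈ Nbr fst snd e ∩ (S.erase a), w g else 0)) := by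
      intro a ha
      have hcard : (S.erase a).card = n := by simp [Finset.card_erase_of_mem ha, hS]
      by_cases haD : a ∈ D
      · simp only [if_pos haD]
        exact ih _ _ hcard e
      · simp only [if_neg haD]
        by_cases hae : a = e
        · subst hae
          rw [if_pos rfl]
          have : ∀ m : Finset E,
              (if a ∈ m then
                (if a ∈ m then mu fst snd w n (S.erase a) (D ∪ Nbr fst snd a) (m.erase a) else 0)
               else 0)
              = (if a ∈ m then mu fst snd w n (S.erase a) (D ∪ Nbr fst snd a) (m.erase a) else 0) := by
            intro m; by_cases h : a ∈ m <;> simp [h]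
          rw [Finset.sum_congr rfl (fun m _ => this m)]
          rw [sum_erase_eq (f := fun m => mu fst snd w n (S.erase a) (D ∪ Nbr fst snd a) m)
            (fun m hm => by
              by_contra h0
              exact absurd ((mu_support fst snd w n _ _ m h0).1 hm) (Finset.notMem_erase a S))]
          exact mu_total fst snd w hw n _ _ hcard
        · rw [if_neg hae]
          have : ∀ m : Finset E,
              (if e ∈ m then
                (if a ∈ m then mu fst snd w n (S.erase a) (D ∪ Nbr fst snd a) (m.erase a) else 0)
               else 0)
              = (if a ∈ m then
                  (if e ∈ m.erase a then mu fst snd w n (S.erase a) (D ∪ Nbr fst snd a) (m.erase a)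
                   else 0)
                 else 0) := by
            intro m
            by_cases ham : a ∈ m <;> by_cases hem : e ∈ m
            · have : e ∈ m.erase a := Finset.mem_erase.mpr ⟨fun h => hae h.symm, hem⟩
              simp [ham, hem, this]
            · have : e ∉ m.erase a := fun h => hem (Finset.mem_of_mem_erase h)
              simp [ham, hem, this]
            · simp [ham, hem]
            · simp [ham, hem]
          rw [Finset.sum_congr rfl (fun m _ => this m)]
          rw [sum_erase_eq (f := fun m =>
              if e ∈ m then mu fst snd w n (S.erase a) (D ∪ Nbr fst snd a) m else 0)
            (fun m hm => by
              by_cases hem : e ∈ m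
              · rw [if_pos hem]
                by_contra h0
                exact absurd ((mu_support fst snd w n _ _ m h0).1 hm) (Finset.notMem_erase a S)
              · rw [if_neg hem])]
          exact ih _ _ hcard e
    have step2 : ∀ a ∈ S,
        (∑ m : Finset E, (w a / ∑ g ∈ S, w g) *
          (if e ∈ m then
            (if a ∈ D then mu fst snd w n (S.erase a) (D ∪ Nbr fst snd a) m
             else if a ∈ m then mu fst snd w n (S.erase a) (D ∪ Nbr fst snd a) (m.erase a) else 0)
           else 0))
        = (w a / ∑ g ∈ S, w g) *
           (if a ∈ D then
            (if e ∈ S.erase a ∧ e ∉ D ∪ Nbr fst snd a then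
              w e / ∑ g ∈ Nbr fst snd e ∩ (S.erase a), w g else 0)
           else if a = e then 1
           else (if e ∈ S.erase a ∧ e ∉ D ∪ Nbr fst snd a then
              w e / ∑ g ∈ Nbr fst snd e ∩ (S.erase a), w g else 0)) := by
      intro a ha
      rw [← Finset.mul_sum, hI a ha]
    rw [Finset.sum_congr rfl step2]
    by_cases he : e ∈ S ∧ e ∉ D
    · obtain ⟨heS, heD⟩ := he
      rw [if_pos ⟨heS, heD⟩]
      have hWN : (0:ℝ) < ∑ g ∈ Nbr fst snd e ∩ S, w g :=
        Finset.sum_pos (fun g _ => hw g)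
          ⟨e, Finset.mem_inter.mpr ⟨self_mem_Nbr fst snd e, heS⟩⟩
      have hVal : ∀ a ∈ S,
          (if a ∈ D then
            (if e ∈ S.erase a ∧ e ∉ D ∪ Nbr fst snd a then
              w e / ∑ g ∈ Nbr fst snd e ∩ (S.erase a), w g else 0)
           else if a = e then 1
           else (if e ∈ S.erase a ∧ e ∉ D ∪ Nbr fst snd a then
              w e / ∑ g ∈ Nbr fst snd e ∩ (S.erase a), w g else 0))
          = (if a = e then 1 else if a ∈ Nbr fst snd e then 0
             else w e / ∑ g ∈ Nbr fst snd e ∩ S, w g) := by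
        intro a ha
        by_cases hae : a = e
        · subst hae
          rw [if_neg heD, if_pos rfl, if_pos rfl]
        · rw [if_neg hae]
          by_cases haN : a ∈ Nbr fst snd e
          · rw [if_pos haN]
            have hz : ¬ (e ∈ S.erase a ∧ e ∉ D ∪ Nbr fst snd a) := by
              rintro ⟨-, h2⟩
              exact h2 (Finset.mem_union_right _ ((Nbr_symm fst snd).mp haN))
            have heN : e ∈ Nbr fst snd a := (Nbr_symm fst snd).mp haN
            by_cases haD : a ∈ D <;> simp [haD, hae, heN]
          · rw [if_neg haN]
            have hcond : e ∈ S.erase a ∧ e ∉ D ∪ Nbr fst snd a := by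
              refine ⟨Finset.mem_erase.mpr ⟨fun h => hae h.symm, heS⟩, ?_⟩
              intro h
              rcases Finset.mem_union.mp h with h | h
              · exact heD h
              · exact haN ((Nbr_symm fst snd).mp h)
            have hset : Nbr fst snd e ∩ (S.erase a) = Nbr fst snd e ∩ S := by
              ext x
              simp only [Finset.mem_inter, Finset.mem_erase]
              constructor
              · rintro ⟨hx1, _, hx3⟩; exact ⟨hx1, hx3⟩
              · rintro ⟨hx1, hx2⟩
                exact ⟨hx1, fun h => haN (h ▸ hx1), hx2⟩
            by_cases haD : a ∈ D <;> simp [haD, hae, hcond.1, hcond.2, hset]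
      rw [Finset.sum_congr rfl (fun a ha => by rw [hVal a ha])]
      rw [← Finset.add_sum_erase _ _ heS, if_pos rfl, mul_one]
      have hrest : ∀ a ∈ S.erase e,
          ((w a / ∑ g ∈ S, w g) *
            (if a = e then 1 else if a ∈ Nbr fst snd e then 0
             else w e / ∑ g ∈ Nbr fst snd e ∩ S, w g))
          = (if a ∈ Nbr fst snd e then 0
             else (w a / ∑ g ∈ S, w g) * (w e / ∑ g ∈ Nbr fst snd e ∩ S, w g)) := by
        intro a ha
        rw [if_neg (Finset.mem_erase.mp ha).1]
        by_cases haN : a ∈ Nbr fst snd e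
        · rw [if_pos haN, if_pos haN, mul_zero]
        · rw [if_neg haN, if_neg haN]
      rw [Finset.sum_congr rfl hrest, Finset.sum_ite, Finset.sum_const_zero, zero_add]
      have hfilter : (S.erase e).filter (fun a => ¬ a ∈ Nbr fst snd e)
          = S \ (Nbr fst snd e ∩ S) := by
        ext x
        simp only [Finset.mem_filter, Finset.mem_erase, Finset.mem_sdiff, Finset.mem_inter]
        constructor
        · rintro ⟨⟨_, hx2⟩, hx3⟩; exact ⟨hx2, fun h => hx3 h.1⟩
        · rintro ⟨hx1, hx2⟩
          have hxN : x ∉ Nbr fst snd e := fun h => hx2 ⟨h, hx1⟩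
          exact ⟨⟨fun h => hxN (h ▸ self_mem_Nbr fst snd e), hx1⟩, hxN⟩
      rw [hfilter]
      have hsum : ∑ a ∈ S \ (Nbr fst snd e ∩ S),
          ((w a / ∑ g ∈ S, w g) * (w e / ∑ g ∈ Nbr fst snd e ∩ S, w g))
          = ((∑ g ∈ S, w g) - (∑ g ∈ Nbr fst snd e ∩ S, w g)) / (∑ g ∈ S, w g)
              * (w e / ∑ g ∈ Nbr fst snd e ∩ S, w g) := by
        rw [← Finset.sum_mul, ← Finset.sum_div,
          Finset.sum_sdiff_eq_sub Finset.inter_subset_right]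
      rw [hsum]
      field_simp
      ring
    · rw [if_neg he]
      apply Finset.sum_eq_zero
      intro a ha
      have hz : (if a ∈ D then
            (if e ∈ S.erase a ∧ e ∉ D ∪ Nbr fst snd a then
              w e / ∑ g ∈ Nbr fst snd e ∩ (S.erase a), w g else 0)
           else if a = e then 1
           else (if e ∈ S.erase a ∧ e ∉ D ∪ Nbr fst snd a then
              w e / ∑ g ∈ Nbr fst snd e ∩ (S.erase a), w g else 0)) = 0 := by
        have hcond : ¬ (e ∈ S.erase a ∧ e ∉ D ∪ Nbr fst snd a) := by
          rintro ⟨h1, h2⟩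
          have heS : e ∈ S := Finset.mem_of_mem_erase h1
          have heD : e ∈ D := by
            by_contra heD
            exact he ⟨heS, heD⟩
          exact h2 (Finset.mem_union_left _ heD)
        by_cases haD : a ∈ D
        · rw [if_pos haD, if_neg hcond]
        · rw [if_neg haD]
          have hae : a ≠ e := by
            rintro rfl
            exact he ⟨ha, haD⟩
          rw [if_neg hae, if_neg hcond]
      rw [hz, mul_zero]
end Aux


/-- Let `G = (V,E)` be a finite graph (edges given by endpoint maps `fst`, `snd`, no loops)
and `w ∈ ℝ_{>0}^E`.  Define `z_e = w_e / (Σ_{g ∈ δ(u) ∪ δ(v)} w_g)` for each edge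
`e = {u,v}`.  Then `z` lies in the convex hull of characteristic vectors of matchings of
`G`: there is a finitely supported probability distribution over matchings whose
marginal at each edge `e` is `z_e`. -/
theorem marginals_in_matching_polytope
    {V E : Type*} [Fintype V] [Fintype E] [DecidableEq V] [DecidableEq E]
    (fst snd : E → V) (hloop : ∀ e, fst e ≠ snd e)
    (w : E → ℝ) (hw : ∀ e, 0 < w e)
    (z : E → ℝ)
    (hz : ∀ e : E, z e = w e /
      (∑ g ∈ Finset.univ.filter
          (fun g => fst g = fst e ∨ snd g = fst e ∨ fst g = snd e ∨ snd g = snd e), w g)) :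
    ∃ (ι : Type) (s : Finset ι) (p : ι → ℝ) (M : ι → Finset E),
      (∀ i ∈ s, 0 ≤ p i) ∧ (∑ i ∈ s, p i = 1) ∧
      (∀ i ∈ s, ∀ e ∈ M i, ∀ f ∈ M i, e ≠ f →
        fst e ≠ fst f ∧ fst e ≠ snd f ∧ snd e ≠ fst f ∧ snd e ≠ snd f) ∧
      (∀ e : E, (∑ i ∈ s, p i * (if e ∈ M i then 1 else 0)) = z e) := by
  classical
  set N : ℕ := Fintype.card E with hN
  set μ : Finset E → ℝ := mu fst snd w N Finset.univ ∅ with hμ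
  have hcard : (Finset.univ : Finset E).card = N := Finset.card_univ
  set k : ℕ := Fintype.card (Finset E) with hk
  set φ : Fin k ≃ Finset E := (Fintype.equivFin (Finset E)).symm with hφ
  refine ⟨ℕ, Finset.range k, fun i => if h : i < k then μ (φ ⟨i, h⟩) else 0,
      fun i => if h : i < k then (if μ (φ ⟨i, h⟩) = 0 then ∅ else φ ⟨i, h⟩) else ∅,
      ?_, ?_, ?_, ?_⟩
  · intro i hi
    dsimp only
    rw [dif_pos (Finset.mem_range.mp hi)]
    exact mu_nonneg fst snd w hw N _ _ _
  · rw [← Fin.sum_univ_eq_sum_range]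
    have : ∀ j : Fin k, (if h : (j : ℕ) < k then μ (φ ⟨(j : ℕ), h⟩) else 0) = μ (φ j) := by
      intro j
      rw [dif_pos j.isLt]
    rw [Finset.sum_congr rfl (fun j _ => this j), Equiv.sum_comp φ μ]
    exact mu_total fst snd w hw N _ _ hcard
  · intro i hi e he f hf hef
    dsimp only at he hf
    rcases Nat.lt_or_ge i k with h | h
    · rw [dif_pos h] at he hf
      by_cases h0 : μ (φ ⟨i, h⟩) = 0
      · rw [if_pos h0] at he
        exact absurd he (Finset.notMem_empty e)
      · rw [if_neg h0] at he hf
        have := (mu_support fst snd w N _ _ _ h0).2.2 e he f hf hef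
        simp only [Nbr, Finset.mem_filter, Finset.mem_univ, true_and, not_or] at this
        obtain ⟨h1, h2, h3, h4⟩ := this
        exact ⟨fun h => h1 h.symm, fun h => h2 h.symm, fun h => h3 h.symm, fun h => h4 h.symm⟩
    · rw [dif_neg (Nat.not_lt.mpr h)] at he
      exact absurd he (Finset.notMem_empty e)
  · intro e
    rw [← Fin.sum_univ_eq_sum_range]
    have hterm : ∀ j : Fin k,
        ((if h : (j : ℕ) < k then μ (φ ⟨(j : ℕ), h⟩) else 0) *
          (if e ∈ (if h : (j : ℕ) < k then (if μ (φ ⟨(j : ℕ), h⟩) = 0 then ∅ else φ ⟨(j : ℕ), h⟩) else ∅)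
           then 1 else 0))
        = (if e ∈ φ j then μ (φ j) else 0) := by
      intro j
      rw [dif_pos j.isLt, dif_pos j.isLt]
      by_cases h0 : μ (φ j) = 0
      · rw [h0]
        simp [h0]
      · rw [if_neg h0]
        by_cases hem : e ∈ φ j <;> simp [hem]
    rw [Finset.sum_congr rfl (fun j _ => hterm j),
      Equiv.sum_comp φ (fun m => if e ∈ m then μ m else 0),
      mu_marginal fst snd w hw N _ _ hcard e,
      if_pos ⟨Finset.mem_univ e, Finset.notMem_empty e⟩, hz e]
    rw [Finset.inter_univ]
    rfl
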